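/- Truth lemma for the canonical model of 2CH: for every sort ∗ (any agent sort a ∈ A or the world sort e), every MCS S of sort ∗, and every formula ξ of sort ∗, the canonical model satisfies S ⊨_∗ ξ if and only if ξ ∈ S. -/

import Mathlib

/-! ## Syntax of the two-level chromatic hypergraph logic 2CH -/

mutual
/-- Agent formulas of sort `a`, for each agent `a : A`. -/
inductive AForm (A : Type) (APa : A → Type) (APe : Type) : A → Type where
  | atom {a : A} : APa a → AForm A APa APe a
  | bot  {a : A} : AForm A APa APe a
  | neg  {a : A} : AForm A APa APe a → AForm A APa APe a
  | and  {a : A} : AForm A APa APe a → AForm A APa APe a → AForm A APa APe a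
  | dia  (a : A) : WForm A APa APe → AForm A APa APe a

/-- World formulas. -/
inductive WForm (A : Type) (APa : A → Type) (APe : Type) : Type where
  | atom : APe → WForm A APa APe
  | bot  : WForm A APa APe
  | neg  : WForm A APa APe → WForm A APa APe
  | and  : WForm A APa APe → WForm A APa APe → WForm A APa APe
  | exi  (a : A) : AForm A APa APe a → WForm A APa APe
end

variable {A : Type} {APa : A → Type} {APe : Type}

/-- Implication of agent formulas. -/
def implA {a : A} (φ ψ : AForm A APa APe a) : AForm A APa APe a := .neg (.and φ (.neg ψ))
/-- Disjunction of agent formulas. -/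
def orA {a : A} (φ ψ : AForm A APa APe a) : AForm A APa APe a := .neg (.and (.neg φ) (.neg ψ))
/-- `⊤` as an agent formula. -/
def topA (a : A) : AForm A APa APe a := .neg .bot
/-- Implication of world formulas. -/
def implW (Φ Ψ : WForm A APa APe) : WForm A APa APe := .neg (.and Φ (.neg Ψ))
/-- Disjunction of world formulas. -/
def orW (Φ Ψ : WForm A APa APe) : WForm A APa APe := .neg (.and (.neg Φ) (.neg Ψ))
/-- The dual modality `□_a Φ := ¬◇_a ¬Φ`. -/
def boxF (a : A) (Φ : WForm A APa APe) : AForm A APa APe a := .neg (.dia a (.neg Φ))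
/-- The dual modality `A_a φ := ¬E_a ¬φ`. -/
def allF (a : A) (φ : AForm A APa APe a) : WForm A APa APe := .neg (.exi a (.neg φ))
/-- Finite disjunction of a list of world formulas. -/
def listOrW : List (WForm A APa APe) → WForm A APa APe
  | [] => .bot
  | Φ :: rest => orW Φ (listOrW rest)

/-- The non-emptiness axiom `⋁_{a∈A} E_a ⊤`. -/
noncomputable def neAxiom (A : Type) [Fintype A] (APa : A → Type) (APe : Type) : WForm A APa APe :=
  listOrW (((Finset.univ : Finset A).toList).map fun a => WForm.exi a (topA a))

/-- `φ` is an instance of a classical propositional tautology (agent sort):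
every Boolean valuation respecting `⊥`, `¬`, `∧` makes it true. -/
def ATaut {a : A} (φ : AForm A APa APe a) : Prop :=
  ∀ v : AForm A APa APe a → Bool,
    v .bot = false →
    (∀ ψ : AForm A APa APe a, v ψ.neg = !(v ψ)) →
    (∀ ψ χ : AForm A APa APe a, v (ψ.and χ) = (v ψ && v χ)) →
    v φ = true

/-- `Φ` is an instance of a classical propositional tautology (world sort). -/
def WTaut (Φ : WForm A APa APe) : Prop :=
  ∀ v : WForm A APa APe → Bool,
    v .bot = false →
    (∀ Ψ : WForm A APa APe, v Ψ.neg = !(v Ψ)) →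
    (∀ Ψ Χ : WForm A APa APe, v (Ψ.and Χ) = (v Ψ && v Χ)) →
    v Φ = true

/-! ## The proof system of 2CH -/

mutual
/-- Derivability `⊢_a` of agent formulas of sort `a`. -/
inductive ProveA (A : Type) [Fintype A] (APa : A → Type) (APe : Type) :
    ∀ {a : A}, AForm A APa APe a → Prop where
  | taut {a : A} {φ : AForm A APa APe a} : ATaut φ → ProveA A APa APe φ
  | mp {a : A} {φ ψ : AForm A APa APe a} :
      ProveA A APa APe (implA φ ψ) → ProveA A APa APe φ → ProveA A APa APe ψ
  | nec {a : A} {Φ : WForm A APa APe} :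
      ProveE A APa APe Φ → ProveA A APa APe (boxF a Φ)
  | monoDia {a : A} {Φ Ψ : WForm A APa APe} :
      ProveE A APa APe (implW Φ Ψ) →
      ProveA A APa APe (implA (AForm.dia a Φ) (AForm.dia a Ψ))
  | monoBox {a : A} {Φ Ψ : WForm A APa APe} :
      ProveE A APa APe (implW Φ Ψ) →
      ProveA A APa APe (implA (boxF a Φ) (boxF a Ψ))
  | adj1 {a : A} {Φ : WForm A APa APe} {ψ : AForm A APa APe a} :
      ProveE A APa APe (implW Φ (allF a ψ)) →
      ProveA A APa APe (implA (AForm.dia a Φ) ψ)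
  | adj2 {a : A} {φ : AForm A APa APe a} {Ψ : WForm A APa APe} :
      ProveE A APa APe (implW (WForm.exi a φ) Ψ) →
      ProveA A APa APe (implA φ (boxF a Ψ))
  | surj {a : A} {φ : AForm A APa APe a} :
      ProveA A APa APe (implA φ (AForm.dia a (WForm.exi a φ)))
  | func {a : A} {φ : AForm A APa APe a} :
      ProveA A APa APe (implA (AForm.dia a (WForm.exi a φ)) φ)

/-- Derivability `⊢_e` of world formulas. -/
inductive ProveE (A : Type) [Fintype A] (APa : A → Type) (APe : Type) :
    WForm A APa APe → Prop where
  | taut {Φ : WForm A APa APe} : WTaut Φ → ProveE A APa APe Φ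
  | mp {Φ Ψ : WForm A APa APe} :
      ProveE A APa APe (implW Φ Ψ) → ProveE A APa APe Φ → ProveE A APa APe Ψ
  | nec {a : A} {φ : AForm A APa APe a} :
      ProveA A APa APe φ → ProveE A APa APe (allF a φ)
  | monoExi {a : A} {φ ψ : AForm A APa APe a} :
      ProveA A APa APe (implA φ ψ) →
      ProveE A APa APe (implW (WForm.exi a φ) (WForm.exi a ψ))
  | monoAll {a : A} {φ ψ : AForm A APa APe a} :
      ProveA A APa APe (implA φ ψ) →
      ProveE A APa APe (implW (allF a φ) (allF a ψ))
  | adj1 {a : A} {Φ : WForm A APa APe} {ψ : AForm A APa APe a} :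
      ProveA A APa APe (implA (AForm.dia a Φ) ψ) →
      ProveE A APa APe (implW Φ (allF a ψ))
  | adj2 {a : A} {φ : AForm A APa APe a} {Ψ : WForm A APa APe} :
      ProveA A APa APe (implA φ (boxF a Ψ)) →
      ProveE A APa APe (implW (WForm.exi a φ) Ψ)
  | nonempty : ProveE A APa APe (neAxiom A APa APe)
end

/-! ## Chromatic hypergraphs and their models -/

/-- A chromatic hypergraph over the set of agents `A`. -/
structure ChromHyp (A : Type) where
  /-- hyperedges (worlds) -/
  E : Type
  /-- views of agent `a` -/
  V : A → Type
  /-- the surjective partial function assigning to a hyperedge the view of agent `a` in it -/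
  proj : ∀ a : A, E → Option (V a)
  surj : ∀ (a : A) (v : V a), ∃ e : E, proj a e = some v
  edge_nonempty : ∀ e : E, ∃ a : A, (proj a e).isSome

/-- A chromatic hypergraph model: a chromatic hypergraph together with valuations. -/
structure ChromHypModel (A : Type) (APa : A → Type) (APe : Type) extends ChromHyp A where
  valA : ∀ a : A, APa a → Set (V a)
  valE : APe → Set E

mutual
/-- Satisfaction `H, v ⊨_a φ` of an agent formula at a view of agent `a`. -/
def SatA (H : ChromHypModel A APa APe) : ∀ (a : A), H.V a → AForm A APa APe a → Prop
  | a, v, .atom p => v ∈ H.valA a p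
  | _, _, .bot => False
  | a, v, .neg φ => ¬ SatA H a v φ
  | a, v, .and φ ψ => SatA H a v φ ∧ SatA H a v ψ
  | a, v, .dia _ Φ => ∃ e : H.E, H.proj a e = some v ∧ SatE H e Φ

/-- Satisfaction `H, e ⊨_e Φ` of a world formula at a hyperedge. -/
def SatE (H : ChromHypModel A APa APe) : H.E → WForm A APa APe → Prop
  | e, .atom p => e ∈ H.valE p
  | _, .bot => False
  | e, .neg Φ => ¬ SatE H e Φ
  | e, .and Φ Ψ => SatE H e Φ ∧ SatE H e Ψ
  | e, .exi a φ => ∃ v : H.V a, H.proj a e = some v ∧ SatA H a v φ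
end


/-! ## Consistent and maximal consistent sets -/

variable (A : Type) [Fintype A] (APa : A → Type) (APe : Type)

/-- Finite conjunction of a list of agent formulas. -/
def listAndA {a : A} : List (AForm A APa APe a) → AForm A APa APe a
  | [] => topA a
  | φ :: rest => .and φ (listAndA rest)

/-- Finite conjunction of a list of world formulas. -/
def listAndW : List (WForm A APa APe) → WForm A APa APe
  | [] => .neg .bot
  | Φ :: rest => .and Φ (listAndW rest)

/-- A set of agent formulas of sort `a` is consistent if `⊥` is not derivable from it. -/
def AConsistent {a : A} (S : Set (AForm A APa APe a)) : Prop :=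
  ¬ ∃ L : List (AForm A APa APe a), (∀ φ ∈ L, φ ∈ S) ∧
      ProveA A APa APe (implA (listAndA A APa APe L) AForm.bot)

/-- A set of world formulas is consistent if `⊥` is not derivable from it. -/
def WConsistent (S : Set (WForm A APa APe)) : Prop :=
  ¬ ∃ L : List (WForm A APa APe), (∀ Φ ∈ L, Φ ∈ S) ∧
      ProveE A APa APe (implW (listAndW A APa APe L) WForm.bot)

/-- A maximal consistent set (MCS) of agent formulas of sort `a`. -/
def AMCS {a : A} (S : Set (AForm A APa APe a)) : Prop :=
  AConsistent A APa APe S ∧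
    ∀ T : Set (AForm A APa APe a), AConsistent A APa APe T → S ⊆ T → S = T

/-- A maximal consistent set (MCS) of world formulas. -/
def WMCS (S : Set (WForm A APa APe)) : Prop :=
  WConsistent A APa APe S ∧
    ∀ T : Set (WForm A APa APe), WConsistent A APa APe T → S ⊆ T → S = T

/-- The relation `R_a` of the canonical model between world-sort MCSs and sort-`a` MCSs:
`S_E R_a S_a` iff for every world formula `Φ ∈ S_E`, `◇_a Φ ∈ S_a`. -/
def canonR (a : A) (SE : Set (WForm A APa APe)) (Sa : Set (AForm A APa APe a)) : Prop :=
  ∀ Φ : WForm A APa APe, Φ ∈ SE → AForm.dia a Φ ∈ Sa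



structure PropSys (F : Type) where
  bot : F
  neg : F → F
  and : F → F → F
  Prv : F → Prop
  taut : ∀ {φ : F},
    (∀ v : F → Bool, v bot = false → (∀ ψ, v (neg ψ) = !(v ψ)) →
      (∀ ψ χ, v (and ψ χ) = (v ψ && v χ)) → v φ = true) → Prv φ
  mp : ∀ {φ ψ : F}, Prv (neg (and φ (neg ψ))) → Prv φ → Prv ψ

namespace PropSys

variable {F : Type} (P : PropSys F)

def impl (φ ψ : F) : F := P.neg (P.and φ (P.neg ψ))

def listAnd (P : PropSys F) : List F → F
  | [] => P.neg P.bot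
  | φ :: r => P.and φ (listAnd P r)

@[simp] theorem listAnd_nil : P.listAnd ([] : List F) = P.neg P.bot := rfl
@[simp] theorem listAnd_cons (φ : F) (r : List F) :
    P.listAnd (φ :: r) = P.and φ (P.listAnd r) := rfl

def Con (S : Set F) : Prop :=
  ¬ ∃ L : List F, (∀ φ ∈ L, φ ∈ S) ∧ P.Prv (P.impl (P.listAnd L) P.bot)

def MCS (S : Set F) : Prop := P.Con S ∧ ∀ T, P.Con T → S ⊆ T → S = T

/-- helper to prove tautology instances -/
theorem taut1 {φ : F}
    (h : ∀ v : F → Bool, v P.bot = false → (∀ ψ, v (P.neg ψ) = !(v ψ)) →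
      (∀ ψ χ, v (P.and ψ χ) = (v ψ && v χ)) → v φ = true) : P.Prv φ := P.taut h

theorem mp2 {φ ψ χ : F} (h : P.Prv (P.impl φ (P.impl ψ χ))) (h1 : P.Prv φ) (h2 : P.Prv ψ) :
    P.Prv χ := P.mp (P.mp h h1) h2

theorem cut {α β γ : F} (h1 : P.Prv (P.impl α β)) (h2 : P.Prv (P.impl β γ)) :
    P.Prv (P.impl α γ) := by
  refine P.mp2 (P.taut fun v hb hn ha => ?_) h1 h2
  simp only [impl, hn, ha, hb]
  cases v α <;> cases v β <;> cases v γ <;> simp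

theorem contra {α β : F} (h : P.Prv (P.impl α β)) : P.Prv (P.impl (P.neg β) (P.neg α)) := by
  refine P.mp (P.taut fun v hb hn ha => ?_) h
  simp only [impl, hn, ha, hb]
  cases v α <;> cases v β <;> simp

theorem mem_entails {L : List F} {x : F} (hx : x ∈ L) : P.Prv (P.impl (P.listAnd L) x) := by
  induction L with
  | nil => exact absurd hx List.not_mem_nil
  | cons y r ih =>
    rcases List.mem_cons.1 hx with rfl | hx
    · refine P.taut fun v hb hn ha => ?_
      simp only [impl, listAnd_nil, listAnd_cons, hn, ha, hb]
      cases v x <;> cases v (P.listAnd r) <;> simp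
    · refine P.cut ?_ (ih hx)
      refine P.taut fun v hb hn ha => ?_
      simp only [impl, listAnd_nil, listAnd_cons, hn, ha, hb]
      cases v y <;> cases v (P.listAnd r) <;> simp

theorem entails_all {L : List F} {A : F} (h : ∀ x ∈ L, P.Prv (P.impl A x)) :
    P.Prv (P.impl A (P.listAnd L)) := by
  induction L with
  | nil =>
    refine P.taut fun v hb hn ha => ?_
    simp only [impl, listAnd_nil, listAnd_cons, hn, ha, hb]
    cases v A <;> simp
  | cons y r ih =>
    have h1 := h y (by simp)
    have h2 := ih fun x hx => h x (by simp [hx])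
    refine P.mp2 (P.taut fun v hb hn ha => ?_) h1 h2
    simp only [impl, listAnd_nil, listAnd_cons, hn, ha, hb]
    cases v A <;> cases v y <;> cases v (P.listAnd r) <;> simp

theorem listAnd_subset {L L' : List F} (h : ∀ x ∈ L', x ∈ L) :
    P.Prv (P.impl (P.listAnd L) (P.listAnd L')) :=
  P.entails_all fun x hx => P.mem_entails (h x hx)

theorem mcs_insert_mem {S : Set F} (hS : P.MCS S) {φ : F} (h : P.Con (insert φ S)) : φ ∈ S := by
  have := hS.2 _ h (Set.subset_insert _ _)
  rw [this]; exact Set.mem_insert _ _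

theorem incon_insert {S : Set F} {χ : F} (h : ¬ P.Con (insert χ S)) :
    ∃ L' : List F, (∀ x ∈ L', x ∈ S) ∧ P.Prv (P.impl (P.listAnd L') (P.neg χ)) := by
  classical
  rw [Con, not_not] at h
  obtain ⟨L, hL, hprv⟩ := h
  refine ⟨L.filter (fun x => decide (x ∈ S)), fun x hx => ?_, ?_⟩
  · exact of_decide_eq_true (List.mem_filter.1 hx).2
  · have hsub : ∀ x ∈ L, x ∈ χ :: L.filter (fun x => decide (x ∈ S)) := by
      intro x hx
      rcases hL x hx with h1 | h1
      · simp [h1]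
      · exact List.mem_cons_of_mem _ (List.mem_filter.2 ⟨hx, decide_eq_true h1⟩)
    have h1 : P.Prv (P.impl (P.listAnd (χ :: L.filter (fun x => decide (x ∈ S)))) P.bot) :=
      P.cut (P.listAnd_subset hsub) hprv
    refine P.mp (P.taut fun v hb hn ha => ?_) h1
    simp only [impl, listAnd_nil, listAnd_cons, hn, ha, hb]
    cases v χ <;> cases v (P.listAnd (L.filter (fun x => decide (x ∈ S)))) <;> simp

theorem mcs_mem_or_neg_mem {S : Set F} (hS : P.MCS S) (φ : F) : φ ∈ S ∨ P.neg φ ∈ S := by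
  by_contra h
  push_neg at h
  have h1 : ¬ P.Con (insert φ S) := by
    intro hc; exact h.1 (P.mcs_insert_mem hS hc)
  have h2 : ¬ P.Con (insert (P.neg φ) S) := by
    intro hc; exact h.2 (P.mcs_insert_mem hS hc)
  obtain ⟨L1, hL1, hp1⟩ := P.incon_insert h1
  obtain ⟨L2, hL2, hp2⟩ := P.incon_insert h2
  refine hS.1 ⟨L1 ++ L2, fun x hx => ?_, ?_⟩
  · rcases List.mem_append.1 hx with hx | hx
    · exact hL1 x hx
    · exact hL2 x hx
  · have e1 : P.Prv (P.impl (P.listAnd (L1 ++ L2)) (P.neg φ)) :=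
      P.cut (P.listAnd_subset fun x hx => List.mem_append_left _ hx) hp1
    have e2 : P.Prv (P.impl (P.listAnd (L1 ++ L2)) (P.neg (P.neg φ))) :=
      P.cut (P.listAnd_subset fun x hx => List.mem_append_right _ hx) hp2
    refine P.mp2 (P.taut fun v hb hn ha => ?_) e1 e2
    simp only [impl, hn, ha, hb]
    cases v (P.listAnd (L1 ++ L2)) <;> cases v φ <;> simp

theorem mcs_not_both {S : Set F} (hS : P.MCS S) {φ : F} (h1 : φ ∈ S) (h2 : P.neg φ ∈ S) :
    False := by
  refine hS.1 ⟨[φ, P.neg φ], by simp [h1, h2], ?_⟩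
  refine P.taut fun v hb hn ha => ?_
  simp only [impl, listAnd_nil, listAnd_cons, hn, ha, hb]
  cases v φ <;> simp

theorem mcs_neg_mem_iff {S : Set F} (hS : P.MCS S) {φ : F} : P.neg φ ∈ S ↔ φ ∉ S := by
  constructor
  · intro h h1; exact P.mcs_not_both hS h1 h
  · intro h; rcases P.mcs_mem_or_neg_mem hS φ with h1 | h1
    · exact absurd h1 h
    · exact h1

theorem mcs_clos {S : Set F} (hS : P.MCS S) {φ ψ : F} (h1 : φ ∈ S)
    (h : P.Prv (P.impl φ ψ)) : ψ ∈ S := by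
  rcases P.mcs_mem_or_neg_mem hS ψ with h2 | h2
  · exact h2
  · exfalso
    refine hS.1 ⟨[φ, P.neg ψ], by simp [h1, h2], ?_⟩
    refine P.mp (P.taut fun v hb hn ha => ?_) h
    simp only [impl, listAnd_nil, listAnd_cons, hn, ha, hb]
    cases v φ <;> cases v ψ <;> simp

theorem mcs_thm_mem {S : Set F} (hS : P.MCS S) {φ : F} (h : P.Prv φ) : φ ∈ S := by
  rcases P.mcs_mem_or_neg_mem hS φ with h2 | h2
  · exact h2
  · exfalso
    refine hS.1 ⟨[P.neg φ], by simp [h2], ?_⟩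
    refine P.mp (P.taut fun v hb hn ha => ?_) h
    simp only [impl, listAnd_nil, listAnd_cons, hn, ha, hb]
    cases v φ <;> simp

theorem mcs_clos2 {S : Set F} (hS : P.MCS S) {φ ψ χ : F} (h1 : φ ∈ S) (h2 : ψ ∈ S)
    (h : P.Prv (P.impl φ (P.impl ψ χ))) : χ ∈ S := by
  rcases P.mcs_mem_or_neg_mem hS χ with h3 | h3
  · exact h3
  · exfalso
    refine hS.1 ⟨[φ, ψ, P.neg χ], by simp [h1, h2, h3], ?_⟩
    refine P.mp (P.taut fun v hb hn ha => ?_) h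
    simp only [impl, listAnd_nil, listAnd_cons, hn, ha, hb]
    cases v φ <;> cases v ψ <;> cases v χ <;> simp

theorem mcs_and_mem {S : Set F} (hS : P.MCS S) {φ ψ : F} :
    P.and φ ψ ∈ S ↔ φ ∈ S ∧ ψ ∈ S := by
  constructor
  · intro h
    constructor
    · refine P.mcs_clos hS h (P.taut fun v hb hn ha => ?_)
      simp only [impl, hn, ha, hb]
      cases v φ <;> cases v ψ <;> simp
    · refine P.mcs_clos hS h (P.taut fun v hb hn ha => ?_)
      simp only [impl, hn, ha, hb]
      cases v φ <;> cases v ψ <;> simp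
  · rintro ⟨h1, h2⟩
    refine P.mcs_clos2 hS h1 h2 (P.taut fun v hb hn ha => ?_)
    simp only [impl, hn, ha, hb]
    cases v φ <;> cases v ψ <;> simp

theorem mcs_bot_not_mem {S : Set F} (hS : P.MCS S) : P.bot ∉ S := by
  intro h
  refine hS.1 ⟨[P.bot], by simp [h], ?_⟩
  refine P.taut fun v hb hn ha => ?_
  simp only [impl, listAnd_nil, listAnd_cons, hn, ha, hb]
  simp

theorem mcs_listAnd_mem {S : Set F} (hS : P.MCS S) {L : List F} (h : ∀ x ∈ L, x ∈ S) :
    P.listAnd L ∈ S := by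
  induction L with
  | nil =>
    refine P.mcs_thm_mem hS (P.taut fun v hb hn ha => ?_)
    simp only [listAnd_nil, listAnd_cons, hn, hb]; simp
  | cons y r ih =>
    exact (P.mcs_and_mem hS).2 ⟨h y (by simp), ih fun x hx => h x (by simp [hx])⟩

theorem chain_list {α : Type*} {c : Set (Set α)} (hchain : IsChain (· ⊆ ·) c)
    (hne : c.Nonempty) : ∀ L : List α, (∀ x ∈ L, x ∈ ⋃₀ c) → ∃ t ∈ c, ∀ x ∈ L, x ∈ t := by
  intro L
  induction L with
  | nil => exact fun _ => ⟨hne.choose, hne.choose_spec, by simp⟩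
  | cons y r ih =>
    intro hL
    obtain ⟨t, htc, ht⟩ := ih (fun x hx => hL x (by simp [hx]))
    obtain ⟨u, huc, hyu⟩ := hL y (by simp)
    rcases hchain.total htc huc with h | h
    · exact ⟨u, huc, fun x hx => by
        rcases List.mem_cons.1 hx with rfl | hx
        · exact hyu
        · exact h (ht x hx)⟩
    · exact ⟨t, htc, fun x hx => by
        rcases List.mem_cons.1 hx with rfl | hx
        · exact h hyu
        · exact ht x hx⟩

theorem lindenbaum {S : Set F} (hS : P.Con S) : ∃ M, S ⊆ M ∧ P.MCS M := by
  have Hc : ∀ c ⊆ {T : Set F | P.Con T}, IsChain (· ⊆ ·) c → c.Nonempty →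
      ∃ ub ∈ {T : Set F | P.Con T}, ∀ s ∈ c, s ⊆ ub := by
    intro c hc hchain hne
    refine ⟨⋃₀ c, ?_, fun s hs => Set.subset_sUnion_of_mem hs⟩
    rintro ⟨L, hL, hprv⟩
    obtain ⟨t, htc, ht⟩ := chain_list hchain hne L hL
    exact hc htc ⟨L, ht, hprv⟩
  obtain ⟨M, hSM, hM⟩ := zorn_subset_nonempty {T : Set F | P.Con T} Hc S hS
  exact ⟨M, hSM, hM.1, fun T hT hMT => Set.Subset.antisymm hMT (hM.2 hT hMT)⟩

end PropSys
/-! ## Instantiation of the generic propositional framework -/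

/-- The agent-sort proof system as a `PropSys`. -/
noncomputable def PAsys (a : A) : PropSys (AForm A APa APe a) where
  bot := .bot
  neg := .neg
  and := .and
  Prv := ProveA A APa APe
  taut := fun h => ProveA.taut h
  mp := fun h1 h2 => ProveA.mp h1 h2

/-- The world-sort proof system as a `PropSys`. -/
noncomputable def PEsys : PropSys (WForm A APa APe) where
  bot := .bot
  neg := .neg
  and := .and
  Prv := ProveE A APa APe
  taut := fun h => ProveE.taut h
  mp := fun h1 h2 => ProveE.mp h1 h2

theorem listAnd_PA {a : A} (L : List (AForm A APa APe a)) :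
    (PAsys A APa APe a).listAnd L = listAndA A APa APe L := by
  induction L with
  | nil => rfl
  | cons y r ih => rw [PropSys.listAnd_cons, ih]; rfl

theorem listAnd_PE (L : List (WForm A APa APe)) :
    (PEsys A APa APe).listAnd L = listAndW A APa APe L := by
  induction L with
  | nil => rfl
  | cons y r ih => rw [PropSys.listAnd_cons, ih]; rfl

theorem PE_neg : (PEsys A APa APe).neg = WForm.neg := rfl
theorem PE_and : (PEsys A APa APe).and = WForm.and := rfl
theorem PE_bot : (PEsys A APa APe).bot = WForm.bot := rfl
theorem PA_neg (a : A) : (PAsys A APa APe a).neg = AForm.neg := rfl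
theorem PA_and (a : A) : (PAsys A APa APe a).and = AForm.and := rfl
theorem PA_bot (a : A) : (PAsys A APa APe a).bot = AForm.bot := rfl

theorem con_PA {a : A} (S : Set (AForm A APa APe a)) :
    (PAsys A APa APe a).Con S ↔ AConsistent A APa APe S := by
  unfold PropSys.Con AConsistent
  simp only [listAnd_PA]
  rfl

theorem con_PE (S : Set (WForm A APa APe)) :
    (PEsys A APa APe).Con S ↔ WConsistent A APa APe S := by
  unfold PropSys.Con WConsistent
  simp only [listAnd_PE]
  rfl

theorem mcs_PA {a : A} (S : Set (AForm A APa APe a)) :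
    (PAsys A APa APe a).MCS S ↔ AMCS A APa APe S := by
  unfold PropSys.MCS AMCS
  simp only [con_PA]

theorem mcs_PE (S : Set (WForm A APa APe)) :
    (PEsys A APa APe).MCS S ↔ WMCS A APa APe S := by
  unfold PropSys.MCS WMCS
  simp only [con_PE]

/-! ## Derived modal facts -/

theorem box_meet (a : A) (Φ Ψ : WForm A APa APe) :
    ProveA A APa APe (implA (.and (boxF a Φ) (boxF a Ψ)) (boxF a (.and Φ Ψ))) := by
  have h1 : ProveA A APa APe (implA (.and (boxF a Φ) (boxF a Ψ)) (boxF a Φ)) := by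
    refine ProveA.taut fun v hb hn ha => ?_
    simp only [implA, hn, ha, hb]
    cases v (boxF a Φ) <;> cases v (boxF a Ψ) <;> simp
  have h2 : ProveA A APa APe (implA (.and (boxF a Φ) (boxF a Ψ)) (boxF a Ψ)) := by
    refine ProveA.taut fun v hb hn ha => ?_
    simp only [implA, hn, ha, hb]
    cases v (boxF a Φ) <;> cases v (boxF a Ψ) <;> simp
  have e1 : ProveE A APa APe (implW (.exi a (.and (boxF a Φ) (boxF a Ψ))) Φ) := ProveE.adj2 h1
  have e2 : ProveE A APa APe (implW (.exi a (.and (boxF a Φ) (boxF a Ψ))) Ψ) := ProveE.adj2 h2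
  have e3 : ProveE A APa APe (implW (.exi a (.and (boxF a Φ) (boxF a Ψ))) (.and Φ Ψ)) := by
    refine (PEsys A APa APe).mp2 ((PEsys A APa APe).taut fun v hb hn ha => ?_) e1 e2
    simp only [PE_neg, PE_and, PE_bot] at hb hn ha
    simp only [implW, PropSys.impl, PE_neg, PE_and, PE_bot, hn, ha, hb]
    cases v (WForm.exi a (.and (boxF a Φ) (boxF a Ψ))) <;> cases v Φ <;> cases v Ψ <;> simp
  exact ProveA.adj2 e3

theorem dia_dneg (a : A) (Φ : WForm A APa APe) :
    ProveA A APa APe (implA (.dia a Φ) (.dia a (.neg (.neg Φ)))) := by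
  refine ProveA.monoDia (ProveE.taut fun v hb hn ha => ?_)
  simp only [implW, hn, ha, hb]
  cases v Φ <;> simp

theorem not_dia_to_box_neg (a : A) (Φ : WForm A APa APe) :
    ProveA A APa APe (implA (.neg (.dia a Φ)) (boxF a (.neg Φ))) := by
  have h : ProveA A APa APe (implA (.dia a (.neg (.neg Φ))) (.dia a Φ)) := by
    refine ProveA.monoDia (ProveE.taut fun v hb hn ha => ?_)
    simp only [implW, hn, ha, hb]
    cases v Φ <;> simp
  exact (PAsys A APa APe a).contra h

theorem box_neg_to_not_dia (a : A) (Φ : WForm A APa APe) :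
    ProveA A APa APe (implA (boxF a (.neg Φ)) (.neg (.dia a Φ))) := by
  have h : ProveA A APa APe (implA (.dia a Φ) (.dia a (.neg (.neg Φ)))) := dia_dneg A APa APe a Φ
  exact (PAsys A APa APe a).contra h

theorem box_listAnd (a : A) {Sa : Set (AForm A APa APe a)}
    (hSa : (PAsys A APa APe a).MCS Sa) (L : List (WForm A APa APe))
    (h : ∀ Ψ ∈ L, boxF a Ψ ∈ Sa) :
    boxF a ((PEsys A APa APe).listAnd L) ∈ Sa := by
  induction L with
  | nil =>
    refine (PAsys A APa APe a).mcs_thm_mem hSa (ProveA.nec (ProveE.taut fun v hb hn ha => ?_))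
    rw [show (PEsys A APa APe).listAnd ([] : List (WForm A APa APe)) = WForm.neg .bot from rfl]
    simp only [hn, hb]; simp
  | cons y r ih =>
    have h1 : boxF a y ∈ Sa := h y (by simp)
    have h2 : boxF a ((PEsys A APa APe).listAnd r) ∈ Sa := ih fun x hx => h x (by simp [hx])
    have h3 := ((PAsys A APa APe a).mcs_and_mem hSa).2 ⟨h1, h2⟩
    exact (PAsys A APa APe a).mcs_clos hSa h3 (box_meet A APa APe a _ _)

/-! ## Existence lemmas for the canonical model -/

theorem exists_world (a : A) {Sa : Set (AForm A APa APe a)} (hSa : AMCS A APa APe Sa)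
    {Φ : WForm A APa APe} (hΦ : AForm.dia a Φ ∈ Sa) :
    ∃ SE, WMCS A APa APe SE ∧ Φ ∈ SE ∧ canonR A APa APe a SE Sa := by
  have hSa' : (PAsys A APa APe a).MCS Sa := (mcs_PA A APa APe Sa).2 hSa
  have hT : (PEsys A APa APe).Con (insert Φ {Ψ | boxF a Ψ ∈ Sa}) := by
    intro hc
    obtain ⟨L', hL', hprv⟩ := (PEsys A APa APe).incon_insert (S := {Ψ | boxF a Ψ ∈ Sa})
      (χ := Φ) (fun hcon => hcon hc)
    have hb : boxF a ((PEsys A APa APe).listAnd L') ∈ Sa :=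
      box_listAnd A APa APe a hSa' L' fun Ψ hΨ => hL' Ψ hΨ
    have hbneg : boxF a (.neg Φ) ∈ Sa :=
      (PAsys A APa APe a).mcs_clos hSa' hb (ProveA.monoBox hprv)
    have hdd : AForm.dia a (.neg (.neg Φ)) ∈ Sa :=
      (PAsys A APa APe a).mcs_clos hSa' hΦ (dia_dneg A APa APe a Φ)
    exact (PAsys A APa APe a).mcs_not_both hSa' hdd hbneg
  obtain ⟨SE, hTSE, hSE⟩ := (PEsys A APa APe).lindenbaum hT
  refine ⟨SE, (mcs_PE A APa APe SE).1 hSE, hTSE (Set.mem_insert _ _), ?_⟩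
  intro Ψ hΨ
  by_contra h
  have hneg : AForm.neg (.dia a Ψ) ∈ Sa := ((PAsys A APa APe a).mcs_neg_mem_iff hSa').2 h
  have hbn : boxF a (.neg Ψ) ∈ Sa :=
    (PAsys A APa APe a).mcs_clos hSa' hneg (not_dia_to_box_neg A APa APe a Ψ)
  have : WForm.neg Ψ ∈ SE := hTSE (Set.mem_insert_of_mem _ hbn)
  exact (PEsys A APa APe).mcs_not_both hSE hΨ this

theorem exists_view (a : A) {SE : Set (WForm A APa APe)} (hSE : WMCS A APa APe SE)
    {φ : AForm A APa APe a} (hφ : WForm.exi a φ ∈ SE) :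
    ∃ Sa, AMCS A APa APe Sa ∧ φ ∈ Sa ∧ canonR A APa APe a SE Sa := by
  have hSE' : (PEsys A APa APe).MCS SE := (mcs_PE A APa APe SE).2 hSE
  have hT : (PAsys A APa APe a).Con
      (insert φ {ψ | ∃ Ψ, Ψ ∈ SE ∧ ψ = AForm.dia a Ψ}) := by
    intro hc
    obtain ⟨L', hL', hprv⟩ := (PAsys A APa APe a).incon_insert
      (S := {ψ | ∃ Ψ, Ψ ∈ SE ∧ ψ = AForm.dia a Ψ}) (χ := φ) (fun hcon => hcon hc)
    -- obtain a list M of world formulas in SE whose diamonds cover L'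
    have hM : ∃ M : List (WForm A APa APe), (∀ Ψ ∈ M, Ψ ∈ SE) ∧
        ∀ x ∈ L', ∃ Ψ ∈ M, x = AForm.dia a Ψ := by
      clear hprv
      induction L' with
      | nil => exact ⟨[], by simp, by simp⟩
      | cons y r ih =>
        obtain ⟨M, hM1, hM2⟩ := ih fun x hx => hL' x (by simp [hx])
        obtain ⟨Ψ, hΨSE, rfl⟩ := hL' y (by simp)
        refine ⟨Ψ :: M, ?_, ?_⟩
        · intro Ψ' hΨ'
          rcases List.mem_cons.1 hΨ' with rfl | hΨ'
          · exact hΨSE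
          · exact hM1 Ψ' hΨ'
        · intro x hx
          rcases List.mem_cons.1 hx with rfl | hx
          · exact ⟨Ψ, by simp⟩
          · obtain ⟨Ψ', h1, h2⟩ := hM2 x hx
            exact ⟨Ψ', by simp [h1], h2⟩
    obtain ⟨M, hM1, hM2⟩ := hM
    have hone : (PAsys A APa APe a).Prv ((PAsys A APa APe a).impl
        (AForm.dia a ((PEsys A APa APe).listAnd M)) ((PAsys A APa APe a).listAnd L')) := by
      refine (PAsys A APa APe a).entails_all fun x hx => ?_
      obtain ⟨Ψ, hΨM, rfl⟩ := hM2 x hx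
      exact ProveA.monoDia ((PEsys A APa APe).mem_entails hΨM)
    have htwo : ProveA A APa APe (implA (.dia a ((PEsys A APa APe).listAnd M)) (.neg φ)) :=
      (PAsys A APa APe a).cut hone hprv
    have hthree : ProveE A APa APe
        (implW ((PEsys A APa APe).listAnd M) (allF a (.neg φ))) := ProveE.adj1 htwo
    have h4 : (PEsys A APa APe).listAnd M ∈ SE := (PEsys A APa APe).mcs_listAnd_mem hSE' hM1
    have h5 : WForm.neg (.exi a (.neg (.neg φ))) ∈ SE :=
      (PEsys A APa APe).mcs_clos hSE' h4 hthree
    have h6 : WForm.exi a (.neg (.neg φ)) ∈ SE := by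
      refine (PEsys A APa APe).mcs_clos hSE' hφ (ProveE.monoExi (ProveA.taut fun v hb hn ha => ?_))
      simp only [implA, hn, ha, hb]
      cases v φ <;> simp
    exact (PEsys A APa APe).mcs_not_both hSE' h6 h5
  obtain ⟨Sa, hTSa, hSa⟩ := (PAsys A APa APe a).lindenbaum hT
  refine ⟨Sa, (mcs_PA A APa APe Sa).1 hSa, hTSa (Set.mem_insert _ _), ?_⟩
  intro Ψ hΨ
  exact hTSa (Set.mem_insert_of_mem _ ⟨Ψ, hΨ, rfl⟩)

theorem exi_mem (a : A) {SE : Set (WForm A APa APe)} {Sa : Set (AForm A APa APe a)}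
    (hSE : WMCS A APa APe SE) (hSa : AMCS A APa APe Sa)
    (hR : canonR A APa APe a SE Sa) {φ : AForm A APa APe a} (hφ : φ ∈ Sa) :
    WForm.exi a φ ∈ SE := by
  have hSE' : (PEsys A APa APe).MCS SE := (mcs_PE A APa APe SE).2 hSE
  have hSa' : (PAsys A APa APe a).MCS Sa := (mcs_PA A APa APe Sa).2 hSa
  by_contra h
  have hnegE : WForm.neg (.exi a φ) ∈ SE := ((PEsys A APa APe).mcs_neg_mem_iff hSE').2 h
  have hdiaΨ : AForm.dia a (.neg (.exi a φ)) ∈ Sa := hR _ hnegE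
  -- X := ¬Eφ ∧ Eφ
  rcases (PAsys A APa APe a).mcs_mem_or_neg_mem hSa'
      (AForm.dia a (.and (.neg (.exi a φ)) (.exi a φ))) with hX | hX
  · -- ◇X ∈ Sa leads to ⊥ ∈ Sa
    have hbotmem : (AForm.bot : AForm A APa APe a) ∈ Sa := by
      refine (PAsys A APa APe a).mcs_clos hSa' hX
        (ProveA.adj1 (ProveE.taut fun v hb hn ha => ?_))
      simp only [implW, hn, ha, hb]
      cases v (WForm.exi a φ) <;> simp
    exact (PAsys A APa APe a).mcs_bot_not_mem hSa' hbotmem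
  · -- ¬◇X ∈ Sa
    have hb1 : boxF a (.neg (.and (.neg (.exi a φ)) (.exi a φ))) ∈ Sa :=
      (PAsys A APa APe a).mcs_clos hSa' hX (not_dia_to_box_neg A APa APe a _)
    have hb2 : boxF a (.exi a φ) ∈ Sa := by
      refine (PAsys A APa APe a).mcs_clos hSa' hφ
        (ProveA.adj2 (ProveE.taut fun v hb hn ha => ?_))
      simp only [implW, hn, ha, hb]
      cases v (WForm.exi a φ) <;> simp
    have hand := ((PAsys A APa APe a).mcs_and_mem hSa').2 ⟨hb2, hb1⟩
    have h3 : boxF a (.and (.exi a φ) (.neg (.and (.neg (.exi a φ)) (.exi a φ)))) ∈ Sa :=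
      (PAsys A APa APe a).mcs_clos hSa' hand (box_meet A APa APe a _ _)
    have h4 : ProveE A APa APe
        (implW (.and (.exi a φ) (.neg (.and (.neg (.exi a φ)) (.exi a φ))))
          (.neg (.neg (.exi a φ)))) := by
      refine ProveE.taut fun v hb hn ha => ?_
      simp only [implW, hn, ha, hb]
      cases v (WForm.exi a φ) <;> simp
    have h5 : boxF a (.neg (.neg (.exi a φ))) ∈ Sa :=
      (PAsys A APa APe a).mcs_clos hSa' h3 (ProveA.monoBox h4)
    have h6 : AForm.neg (.dia a (.neg (.exi a φ))) ∈ Sa :=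
      (PAsys A APa APe a).mcs_clos hSa' h5 (box_neg_to_not_dia A APa APe a _)
    exact (PAsys A APa APe a).mcs_not_both hSa' hdiaΨ h6

/-! ## The truth lemma, by mutual induction on formulas -/

mutual
theorem truthA (H : ChromHypModel A APa APe)
    (eE : H.E ≃ {S : Set (WForm A APa APe) // WMCS A APa APe S})
    (eV : ∀ a : A, H.V a ≃ {S : Set (AForm A APa APe a) // AMCS A APa APe S})
    (hproj : ∀ (a : A) (e : H.E) (v : H.V a),
      H.proj a e = some v ↔ canonR A APa APe a (eE e).val ((eV a) v).val)
    (hvalA : ∀ (a : A) (p : APa a) (v : H.V a),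
      v ∈ H.valA a p ↔ AForm.atom p ∈ ((eV a) v).val)
    (hvalE : ∀ (p : APe) (e : H.E), e ∈ H.valE p ↔ WForm.atom p ∈ (eE e).val)
    (a : A) (v : H.V a) (φ : AForm A APa APe a) :
    SatA H a v φ ↔ φ ∈ ((eV a) v).val := by
  have hSa' : (PAsys A APa APe a).MCS ((eV a) v).val :=
    (mcs_PA A APa APe _).2 ((eV a) v).2
  cases φ with
  | atom p =>
    simp only [SatA]
    exact hvalA a p v
  | bot =>
    simp only [SatA]
    exact iff_of_false (fun h => h) ((PAsys A APa APe a).mcs_bot_not_mem hSa')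
  | neg ψ =>
    simp only [SatA]
    rw [truthA H eE eV hproj hvalA hvalE a v ψ]
    exact ((PAsys A APa APe a).mcs_neg_mem_iff hSa').symm
  | and ψ χ =>
    simp only [SatA]
    rw [truthA H eE eV hproj hvalA hvalE a v ψ, truthA H eE eV hproj hvalA hvalE a v χ]
    exact ((PAsys A APa APe a).mcs_and_mem hSa').symm
  | dia a' Φ =>
    simp only [SatA]
    constructor
    · rintro ⟨e, hpe, hSat⟩
      exact (hproj a e v).1 hpe Φ ((truthE H eE eV hproj hvalA hvalE e Φ).1 hSat)
    · intro h
      obtain ⟨SE, hWM, hΦ, hR⟩ := exists_world A APa APe a ((eV a) v).2 h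
      refine ⟨eE.symm ⟨SE, hWM⟩, ?_, ?_⟩
      · refine (hproj a _ v).2 ?_
        simp only [Equiv.apply_symm_apply]
        exact hR
      · rw [truthE H eE eV hproj hvalA hvalE]
        simp only [Equiv.apply_symm_apply]
        exact hΦ

theorem truthE (H : ChromHypModel A APa APe)
    (eE : H.E ≃ {S : Set (WForm A APa APe) // WMCS A APa APe S})
    (eV : ∀ a : A, H.V a ≃ {S : Set (AForm A APa APe a) // AMCS A APa APe S})
    (hproj : ∀ (a : A) (e : H.E) (v : H.V a),
      H.proj a e = some v ↔ canonR A APa APe a (eE e).val ((eV a) v).val)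
    (hvalA : ∀ (a : A) (p : APa a) (v : H.V a),
      v ∈ H.valA a p ↔ AForm.atom p ∈ ((eV a) v).val)
    (hvalE : ∀ (p : APe) (e : H.E), e ∈ H.valE p ↔ WForm.atom p ∈ (eE e).val)
    (e : H.E) (Φ : WForm A APa APe) :
    SatE H e Φ ↔ Φ ∈ (eE e).val := by
  have hSE' : (PEsys A APa APe).MCS (eE e).val := (mcs_PE A APa APe _).2 (eE e).2
  cases Φ with
  | atom p =>
    simp only [SatE]
    exact hvalE p e
  | bot =>
    simp only [SatE]
    exact iff_of_false (fun h => h) ((PEsys A APa APe).mcs_bot_not_mem hSE')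
  | neg Ψ =>
    simp only [SatE]
    rw [truthE H eE eV hproj hvalA hvalE e Ψ]
    exact ((PEsys A APa APe).mcs_neg_mem_iff hSE').symm
  | and Ψ Χ =>
    simp only [SatE]
    rw [truthE H eE eV hproj hvalA hvalE e Ψ, truthE H eE eV hproj hvalA hvalE e Χ]
    exact ((PEsys A APa APe).mcs_and_mem hSE').symm
  | exi a φ =>
    simp only [SatE]
    constructor
    · rintro ⟨v, hpe, hSat⟩
      exact exi_mem A APa APe a (eE e).2 ((eV a) v).2 ((hproj a e v).1 hpe)
        ((truthA H eE eV hproj hvalA hvalE a v φ).1 hSat)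
    · intro h
      obtain ⟨Sa, hAM, hφ, hR⟩ := exists_view A APa APe a (eE e).2 h
      refine ⟨(eV a).symm ⟨Sa, hAM⟩, ?_, ?_⟩
      · refine (hproj a e _).2 ?_
        simp only [Equiv.apply_symm_apply]
        exact hR
      · rw [truthA H eE eV hproj hvalA hvalE]
        simp only [Equiv.apply_symm_apply]
        exact hφ
end
/-- **Truth lemma for the canonical model of 2CH**: in any chromatic hypergraph model `H`
realizing the canonical model — its hyperedges are the world-sort MCSs, its `a`-views are
the sort-`a` MCSs, its projections are given by the canonical relations `R_a`, and its
valuations are given by membership of atomic propositions — satisfaction coincides with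
membership: `S ⊨_∗ ξ` iff `ξ ∈ S`, for every sort `∗` and every formula `ξ` of sort `∗`. -/
theorem canonical_truth_lemma (A : Type) [Fintype A] (APa : A → Type) (APe : Type)
    (H : ChromHypModel A APa APe)
    (eE : H.E ≃ {S : Set (WForm A APa APe) // WMCS A APa APe S})
    (eV : ∀ a : A, H.V a ≃ {S : Set (AForm A APa APe a) // AMCS A APa APe S})
    (hproj : ∀ (a : A) (e : H.E) (v : H.V a),
      H.proj a e = some v ↔ canonR A APa APe a (eE e).val ((eV a) v).val)
    (hvalA : ∀ (a : A) (p : APa a) (v : H.V a),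
      v ∈ H.valA a p ↔ AForm.atom p ∈ ((eV a) v).val)
    (hvalE : ∀ (p : APe) (e : H.E), e ∈ H.valE p ↔ WForm.atom p ∈ (eE e).val) :
    (∀ (a : A) (v : H.V a) (φ : AForm A APa APe a),
      SatA H a v φ ↔ φ ∈ ((eV a) v).val) ∧
    (∀ (e : H.E) (Φ : WForm A APa APe),
      SatE H e Φ ↔ Φ ∈ (eE e).val) := by
  exact ⟨fun a v φ => truthA A APa APe H eE eV hproj hvalA hvalE a v φ,
    fun e Φ => truthE A APa APe H eE eV hproj hvalA hvalE e Φ⟩
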